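/- Define the upper game-theoretic expectation of F : Ω → [0,∞] by Ē(F) := inf { c ≥ 0 : F ∈ cl(C_c) }, where cl(C_c) is the smallest liminf-closed class containing C_c. Assume the family (C_c)_{c≥0} is nested (c ≤ c' implies C_c ⊆ C_{c'}). Then Ē satisfies the Fatou property: for any sequence of functions Fₙ : Ω → [0,∞], Ē(liminf_{n→∞} Fₙ) ≤ liminf_{n→∞} Ē(Fₙ). -/
import Mathlib


set_option autoImplicit false

open Filter

/-- Liminf-closedness of a class of `[0,∞]`-valued functionals. -/
def LiminfClosed {Ω : Type*} (C : Set (Ω → ENNReal)) : Prop :=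
  ∀ F : Ω → ENNReal,
    (∃ Fn : ℕ → Ω → ENNReal, (∀ n, Fn n ∈ C) ∧
      ∀ ω, F ω ≤ Filter.liminf (fun n => Fn n ω) Filter.atTop) → F ∈ C

/-- The smallest liminf-closed class containing `C`. -/
def liminfClosure {Ω : Type*} (C : Set (Ω → ENNReal)) : Set (Ω → ENNReal) :=
  ⋂₀ {D : Set (Ω → ENNReal) | LiminfClosed D ∧ C ⊆ D}

/-- The upper game-theoretic expectation associated with a family of classes `(C_c)_{c ≥ 0}`:
`Ē(F) = inf { c ≥ 0 : F ∈ cl(C_c) }`. -/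
noncomputable def upperGameExp {Ω : Type*} (Cc : NNReal → Set (Ω → ENNReal))
    (F : Ω → ENNReal) : ENNReal :=
  ⨅ c ∈ {c : NNReal | F ∈ liminfClosure (Cc c)}, (c : ENNReal)

lemma liminfClosed_liminfClosure {Ω : Type*} (C : Set (Ω → ENNReal)) :
    LiminfClosed (liminfClosure C) := by
  rintro F ⟨Fn, hFn, hle⟩ D hD
  exact hD.1 F ⟨Fn, fun n => hFn n D hD, hle⟩

lemma liminfClosure_mono {Ω : Type*} {C C' : Set (Ω → ENNReal)} (h : C ⊆ C') :
    liminfClosure C ⊆ liminfClosure C' := by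
  intro F hF D hD
  exact hF D ⟨hD.1, h.trans hD.2⟩

/-- Fatou property of the upper game-theoretic expectation: for a nested family `(C_c)`,
`Ē(liminf Fₙ) ≤ liminf Ē(Fₙ)`. -/
theorem upperGameExp_liminf_le {Ω : Type*} (Cc : NNReal → Set (Ω → ENNReal))
    (hmono : ∀ c c' : NNReal, c ≤ c' → Cc c ⊆ Cc c')
    (Fn : ℕ → Ω → ENNReal) :
    upperGameExp Cc (fun ω => Filter.liminf (fun n => Fn n ω) Filter.atTop)
      ≤ Filter.liminf (fun n => upperGameExp Cc (Fn n)) Filter.atTop := by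
  by_contra h
  push_neg at h
  obtain ⟨c, hLc, hcA⟩ := ENNReal.lt_iff_exists_nnreal_btwn.mp h
  have hfreq : ∃ᶠ n in atTop, upperGameExp Cc (Fn n) < (c : ENNReal) :=
    Filter.frequently_lt_of_liminf_lt (by isBoundedDefault) hLc
  obtain ⟨φ, hφ, hφlt⟩ := Filter.extraction_of_frequently_atTop hfreq
  -- each `Fn (φ k)` belongs to `liminfClosure (Cc c)`
  have hmem : ∀ k, Fn (φ k) ∈ liminfClosure (Cc c) := by
    intro k
    have := hφlt k
    rw [upperGameExp] at this
    simp only [iInf_lt_iff] at this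
    obtain ⟨c', hc', hlt⟩ := this
    have hc'c : c' ≤ c := by
      by_contra hcon
      push_neg at hcon
      exact absurd hlt (by simp [ENNReal.coe_le_coe.mpr (le_of_lt hcon), not_lt,
        le_iInf_iff] at *; exact le_of_lt hcon)
    exact liminfClosure_mono (hmono c' c hc'c) hc'
  -- the liminf belongs to `liminfClosure (Cc c)`
  have hF : (fun ω => Filter.liminf (fun n => Fn n ω) Filter.atTop) ∈ liminfClosure (Cc c) := by
    apply liminfClosed_liminfClosure (Cc c) _
    refine ⟨fun k => Fn (φ k), hmem, fun ω => ?_⟩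
    have hmap : map φ atTop ≤ (atTop : Filter ℕ) := hφ.tendsto_atTop
    calc Filter.liminf (fun n => Fn n ω) Filter.atTop
        ≤ Filter.liminf (fun n => Fn n ω) (map φ atTop) :=
          liminf_le_liminf_of_le hmap
      _ = Filter.liminf (fun k => Fn (φ k) ω) atTop := by
          exact (Filter.liminf_comp (fun n => Fn n ω) φ atTop).symm
  have : upperGameExp Cc (fun ω => Filter.liminf (fun n => Fn n ω) Filter.atTop)
      ≤ (c : ENNReal) := by
    rw [upperGameExp]
    exact iInf₂_le c hF
  exact absurd (this.trans_lt hcA) (lt_irrefl _)
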